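/- arXiv:2205.01993 — 2 statements merged into one kernel-verified Lean document; each statement's English description precedes it below -/
import Mathlib

section
/- Let E ⊂ ℍ be a bounded open set, let Ω = B_R(0) with R > 0 large enough that the closure of the h-convex hull co(E) is contained in Ω, and let f ∈ C(ℍ) satisfy E = {p ∈ ℍ : f(p) < 0} and f ≡ K in ℍ ∖ B_R(0) for some K > 0. Let Q(f) denote the h-quasiconvex envelope of f. Then Q(f) is continuous on ℍ, Q(f) ≡ K in ℍ ∖ B_R(0), and co(E) = {p ∈ Ω : Q(f)(p) < 0}. -/
noncomputable section

/-- The underlying space of the first Heisenberg group: `ℝ³`. -/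
abbrev Heis := ℝ × ℝ × ℝ

/-- Heisenberg group multiplication. -/
def hmul (p q : Heis) : Heis :=
  (p.1 + q.1, p.2.1 + q.2.1, p.2.2 + q.2.2 + (p.1 * q.2.1 - q.1 * p.2.1) / 2)

/-- Heisenberg group inverse. -/
def hinv (p : Heis) : Heis := (-p.1, -p.2.1, -p.2.2)

/-- The horizontal plane `ℍ_p = p · ℍ₀` through `p`. -/
def hplane (p : Heis) : Set Heis := {q | ∃ h : Heis, h.2.2 = 0 ∧ q = hmul p h}

/-- The (Euclidean) segment `[p,q]`. -/
def hseg (p q : Heis) : Set Heis :=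
  {w | ∃ l : ℝ, 0 ≤ l ∧ l ≤ 1 ∧ w = (1 - l) • p + l • q}

/-- The half-open segment `(p,q]`. -/
def hsegHalfOpen (p q : Heis) : Set Heis :=
  {w | ∃ l : ℝ, 0 < l ∧ l ≤ 1 ∧ w = (1 - l) • p + l • q}

/-- A set `E ⊆ ℍ` is h-convex if for every `p ∈ E` and `q ∈ ℍ_p ∩ E`,
the horizontal segment `[p,q]` lies in `E`. -/
def IsHConvex (E : Set Heis) : Prop :=
  ∀ p ∈ E, ∀ q ∈ hplane p, q ∈ E → ∀ w ∈ hseg p q, w ∈ E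

/-- A set `E` is h-convex up to boundary if for every `p ∈ ∂E` and `q ∈ ℍ_p ∩ E`,
the half-open segment `(p,q]` lies in `E`. -/
def IsHConvexUpToBoundary (E : Set Heis) : Prop :=
  ∀ p ∈ frontier E, ∀ q ∈ hplane p, q ∈ E → ∀ w ∈ hsegHalfOpen p q, w ∈ E

/-- A function `u` is h-quasiconvex on `Ω` if `u(w) ≤ max (u p) (u q)` for all
`p ∈ Ω`, `q ∈ ℍ_p ∩ Ω` and `w ∈ [p,q]`. -/
def IsHQuasiconvexOn (Ω : Set Heis) (u : Heis → ℝ) : Prop :=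
  ∀ p ∈ Ω, ∀ q ∈ hplane p, q ∈ Ω → ∀ w ∈ hseg p q, u w ≤ max (u p) (u q)

/-- `Qf` is the h-quasiconvex envelope of `f` on `Ω`: the greatest h-quasiconvex
function majorized by `f` on `Ω` (equivalently, the pointwise supremum of all
h-quasiconvex minorants of `f`). -/
def IsHQCEnvelopeOn (Ω : Set Heis) (f Qf : Heis → ℝ) : Prop :=
  IsHQuasiconvexOn Ω Qf ∧ (∀ p ∈ Ω, Qf p ≤ f p) ∧
    ∀ g : Heis → ℝ, IsHQuasiconvexOn Ω g → (∀ p ∈ Ω, g p ≤ f p) → ∀ p ∈ Ω, g p ≤ Qf p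

/-- The Korányi gauge. -/
def kGauge (p : Heis) : ℝ := ((p.1 ^ 2 + p.2.1 ^ 2) ^ 2 + 16 * p.2.2 ^ 2) ^ ((1 : ℝ) / 4)

/-- The left-invariant gauge metric `d_H(p,q) = |p⁻¹ · q|_G`. -/
def dLeft (p q : Heis) : ℝ := kGauge (hmul (hinv p) q)

/-- The right-invariant gauge metric `d̃_H(p,q) = |p · q⁻¹|_G`. -/
def dRight (p q : Heis) : ℝ := kGauge (hmul p (hinv q))

/-- The gauge ball `B_r(p) = {q : |p⁻¹ · q|_G < r}`. -/
def gball (p : Heis) (r : ℝ) : Set Heis := {q | dLeft p q < r}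

/-- The horizontal gradient `∇_H φ(p) = (X₁ φ(p), X₂ φ(p))`, where
`X₁ = ∂_x − (y/2) ∂_z` and `X₂ = ∂_y + (x/2) ∂_z`. -/
def hGrad (φ : Heis → ℝ) (p : Heis) : ℝ × ℝ :=
  (fderiv ℝ φ p ((1, 0, -p.2.1 / 2) : Heis), fderiv ℝ φ p ((0, 1, p.1 / 2) : Heis))

/-- The pairing `⟨∇_H φ(p), (p⁻¹ · ξ)_h⟩`. -/
def hpair (φ : Heis → ℝ) (p ξ : Heis) : ℝ :=
  (hGrad φ p).1 * (hmul (hinv p) ξ).1 + (hGrad φ p).2 * (hmul (hinv p) ξ).2.1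

/-- Local boundedness of `u` on `A`. -/
def LocBddOn (A : Set Heis) (u : Heis → ℝ) : Prop :=
  ∀ p ∈ A, ∃ s ∈ nhds p, ∃ C : ℝ, ∀ q ∈ s ∩ A, |u q| ≤ C

/-- `u` is a viscosity subsolution of `u + H(p, u, ∇_H u) = f` in `Ω`, where
`H(p, u, ∇_H u) = sup {⟨∇_H u(p), (p⁻¹·ξ)_h⟩ : ξ ∈ ℍ_p ∩ Ω, u(ξ) < u(p)}`
(with the supremum understood to be `0` when `∇_H φ(p) = 0`). -/
def IsSubSoln (Ω : Set Heis) (f u : Heis → ℝ) : Prop :=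
  UpperSemicontinuousOn u Ω ∧ LocBddOn Ω u ∧
    ∀ p ∈ Ω, ∀ φ : Heis → ℝ, ContDiff ℝ 1 φ →
      IsMaxOn (fun q => u q - φ q) Ω p →
        (∀ ξ ∈ hplane p, ξ ∈ Ω → u ξ < u p → u p + hpair φ p ξ ≤ f p) ∧
        (hGrad φ p = 0 → u p ≤ f p)

/-- `u` is a viscosity supersolution of `u + H(p, u, ∇_H u) = f` in `Ω`, where for
supersolutions `H(p, u, ∇_H u) = sup {⟨∇_H u(p), (p⁻¹·ξ)_h⟩ : ξ ∈ ℍ_p ∩ Ω, u(ξ) ≤ u(p)}`.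
(The set `Ŝ_p(u)` always contains `p` itself, so the inequality
`u(p) + sup ≥ f(p)` is expressed in ε-form.) -/
def IsSuperSoln (Ω : Set Heis) (f u : Heis → ℝ) : Prop :=
  LowerSemicontinuousOn u Ω ∧ LocBddOn Ω u ∧
    ∀ p ∈ Ω, ∀ φ : Heis → ℝ, ContDiff ℝ 1 φ →
      IsMinOn (fun q => u q - φ q) Ω p →
        ∀ ε > 0, ∃ ξ ∈ hplane p, ξ ∈ Ω ∧ u ξ ≤ u p ∧ f p - ε ≤ u p + hpair φ p ξ

/-- `w` is the upper semicontinuous envelope of `v` on `A`: the smallest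
upper semicontinuous function on `A` that majorizes `v`. -/
def IsUscEnvOn (A : Set Heis) (v w : Heis → ℝ) : Prop :=
  UpperSemicontinuousOn w A ∧ (∀ q ∈ A, v q ≤ w q) ∧
    ∀ z : Heis → ℝ, UpperSemicontinuousOn z A → (∀ q ∈ A, v q ≤ z q) → ∀ q ∈ A, w q ≤ z q

/-- `w` is the lower semicontinuous envelope of `v` on `A`: the largest
lower semicontinuous function on `A` minorized by `v`. -/
def IsLscEnvOn (A : Set Heis) (v w : Heis → ℝ) : Prop :=
  LowerSemicontinuousOn w A ∧ (∀ q ∈ A, w q ≤ v q) ∧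
    ∀ z : Heis → ℝ, LowerSemicontinuousOn z A → (∀ q ∈ A, z q ≤ v q) → ∀ q ∈ A, z q ≤ w q

/-- The h-convex hull of `E`: the intersection of all h-convex sets containing `E`. -/
def hconvexHull (E : Set Heis) : Set Heis := ⋂₀ {D : Set Heis | IsHConvex D ∧ E ⊆ D}

/-- The direct convexification operator
`T[f](w) = inf {max (f p) (f q) : w ∈ [p,q], p ∈ Ω, q ∈ Ω ∩ ℍ_p}`. -/
def Tconv (Ω : Set Heis) (f : Heis → ℝ) : Heis → ℝ := fun w =>
  sInf {y | ∃ p ∈ Ω, ∃ q ∈ hplane p, q ∈ Ω ∧ w ∈ hseg p q ∧ y = max (f p) (f q)}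

/-! ### Auxiliary lemmas -/

section Aux

open Set

@[simp] lemma hmul_zero' (p : Heis) : hmul p (0 : Heis) = p := by
  simp [hmul, Prod.ext_iff]

@[simp] lemma zero_hmul' (p : Heis) : hmul (0 : Heis) p = p := by
  simp [hmul, Prod.ext_iff]

lemma hmul_assoc' (p q r : Heis) : hmul (hmul p q) r = hmul p (hmul q r) := by
  simp only [hmul, Prod.ext_iff]
  refine ⟨by ring, by ring, by ring⟩

lemma hmul_hinv_cancel' (p q : Heis) : hmul (hmul p (hinv q)) q = p := by
  simp only [hmul, hinv, Prod.ext_iff]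
  refine ⟨by ring, by ring, by ring⟩

lemma hinv_hmul_cancel' (a p : Heis) : hmul (hinv a) (hmul a p) = p := by
  simp only [hmul, hinv, Prod.ext_iff]
  refine ⟨by ring, by ring, by ring⟩

lemma hmul_hinv_self (p : Heis) : hmul p (hinv p) = 0 := by
  simp only [hmul, hinv, Prod.ext_iff, Prod.fst_zero, Prod.snd_zero]
  refine ⟨by ring, by ring, by ring⟩

lemma continuous_hmul : Continuous (fun x : Heis × Heis => hmul x.1 x.2) := by
  unfold hmul; fun_prop

lemma continuous_hmul_left (a : Heis) : Continuous (fun q : Heis => hmul a q) := by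
  unfold hmul; fun_prop

lemma hmul_affine (a p q : Heis) (l : ℝ) :
    hmul a ((1 - l) • p + l • q) = (1 - l) • hmul a p + l • hmul a q := by
  simp only [hmul, Prod.ext_iff, Prod.smul_fst, Prod.smul_snd, Prod.fst_add, Prod.snd_add,
    smul_eq_mul, Prod.mk_add_mk, Prod.smul_mk]
  refine ⟨by ring, by ring, by ring⟩

lemma hplane_hmul {p q : Heis} (a : Heis) (h : q ∈ hplane p) :
    hmul a q ∈ hplane (hmul a p) := by
  obtain ⟨h0, h0h, rfl⟩ := h
  exact ⟨h0, h0h, (hmul_assoc' a p h0).symm⟩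

lemma hseg_hmul {p q w : Heis} (a : Heis) (h : w ∈ hseg p q) :
    hmul a w ∈ hseg (hmul a p) (hmul a q) := by
  obtain ⟨l, h0, h1, rfl⟩ := h
  exact ⟨l, h0, h1, hmul_affine a p q l⟩

lemma IsHConvex.preimage {D : Set Heis} (hD : IsHConvex D) (a : Heis) :
    IsHConvex ((fun q => hmul a q) ⁻¹' D) := by
  intro p hp q hq hqD w hw
  exact hD _ hp _ (hplane_hmul a hq) hqD _ (hseg_hmul a hw)

lemma subset_hconvexHull (E : Set Heis) : E ⊆ hconvexHull E := by
  intro x hx D hD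
  exact hD.2 hx

lemma hconvexHull_min {E D : Set Heis} (hD : IsHConvex D) (hED : E ⊆ D) :
    hconvexHull E ⊆ D := fun x hx => hx D ⟨hD, hED⟩

lemma isHConvex_hconvexHull (E : Set Heis) : IsHConvex (hconvexHull E) := by
  intro p hp q hq hqE w hw D hD
  exact hD.1 p (hp D hD) q hq (hqE D hD) w hw

lemma hconvexHull_mono {E F : Set Heis} (h : E ⊆ F) : hconvexHull E ⊆ hconvexHull F :=
  hconvexHull_min (isHConvex_hconvexHull F) (h.trans (subset_hconvexHull F))

lemma hmul_mem_hconvexHull {S : Set Heis} (a : Heis) {p : Heis}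
    (hp : p ∈ hconvexHull S) : hmul a p ∈ hconvexHull ((fun x => hmul a x) '' S) := by
  have : hconvexHull S ⊆ (fun q => hmul a q) ⁻¹' (hconvexHull ((fun x => hmul a x) '' S)) := by
    apply hconvexHull_min ((isHConvex_hconvexHull _).preimage a)
    intro x hx
    exact subset_hconvexHull _ ⟨x, hx, rfl⟩
  exact this hp

lemma sublevel_hconvex {u : Heis → ℝ} (hu : IsHQuasiconvexOn Set.univ u) (t : ℝ) :
    IsHConvex {x | u x ≤ t} := by
  intro p hp q hq hqt w hw
  exact le_trans (hu p trivial q hq trivial w hw) (max_le hp hqt)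

end Aux
section Gauge

open Set

/-- The fourth power of the Korányi gauge. -/
def N4 (p : Heis) : ℝ := (p.1 ^ 2 + p.2.1 ^ 2) ^ 2 + 16 * p.2.2 ^ 2

lemma N4_nonneg (p : Heis) : 0 ≤ N4 p := by
  have := sq_nonneg (p.1 ^ 2 + p.2.1 ^ 2)
  have := sq_nonneg p.2.2
  simp only [N4]; nlinarith

lemma kGauge_eq (p : Heis) : kGauge p = (N4 p) ^ ((1:ℝ)/4) := rfl

lemma kGauge_lt_iff {p : Heis} {R : ℝ} (hR : 0 < R) : kGauge p < R ↔ N4 p < R ^ 4 := by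
  rw [kGauge_eq]
  rw [show (R : ℝ) ^ 4 = (R ^ (4:ℕ) : ℝ) from rfl]
  constructor
  · intro h
    have h0 : (0:ℝ) ≤ N4 p ^ ((1:ℝ)/4) := Real.rpow_nonneg (N4_nonneg p) _
    have := pow_lt_pow_left₀ h h0 (n := 4) (by norm_num)
    calc N4 p = (N4 p ^ ((1:ℝ)/4)) ^ (4:ℕ) := by
            rw [← Real.rpow_natCast (N4 p ^ ((1:ℝ)/4)) 4, ← Real.rpow_mul (N4_nonneg p)]
            norm_num
      _ < R ^ (4:ℕ) := this
  · intro h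
    have : N4 p ^ ((1:ℝ)/4) < (R ^ (4:ℕ)) ^ ((1:ℝ)/4) :=
      Real.rpow_lt_rpow (N4_nonneg p) h (by norm_num)
    calc N4 p ^ ((1:ℝ)/4) < (R ^ (4:ℕ)) ^ ((1:ℝ)/4) := this
      _ = R := by
          rw [← Real.rpow_natCast R 4, ← Real.rpow_mul hR.le]
          norm_num

lemma mem_gball_iff {q : Heis} {R : ℝ} (hR : 0 < R) :
    q ∈ gball (0 : Heis) R ↔ N4 q < R ^ 4 := by
  have h1 : hmul (hinv (0 : Heis)) q = q := by
    have : hinv (0 : Heis) = 0 := by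
      simp [hinv, Prod.ext_iff, Prod.fst_zero, Prod.snd_zero]
    rw [this, zero_hmul']
  rw [gball, Set.mem_setOf_eq, dLeft, h1, kGauge_lt_iff hR]

lemma sq_convex_aux {l x y : ℝ} (h0 : 0 ≤ l) (h1 : l ≤ 1) :
    ((1 - l) * x + l * y) ^ 2 ≤ (1 - l) * x ^ 2 + l * y ^ 2 := by
  nlinarith [mul_nonneg (mul_nonneg h0 (sub_nonneg.2 h1)) (sq_nonneg (x - y))]

lemma N4_convex {p q : Heis} {l : ℝ} (h0 : 0 ≤ l) (h1 : l ≤ 1) :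
    N4 ((1 - l) • p + l • q) ≤ (1 - l) * N4 p + l * N4 q := by
  obtain ⟨a, b, c⟩ := p
  obtain ⟨a', b', c'⟩ := q
  simp only [N4, Prod.smul_mk, Prod.mk_add_mk, smul_eq_mul]
  set X : ℝ := (1 - l) * a + l * a' with hX
  set Y : ℝ := (1 - l) * b + l * b' with hY
  set Z : ℝ := (1 - l) * c + l * c' with hZ
  set s : ℝ := a ^ 2 + b ^ 2 with hs
  set s' : ℝ := a' ^ 2 + b' ^ 2 with hs'
  have hxa := sq_convex_aux (x := a) (y := a') h0 h1
  have hyb := sq_convex_aux (x := b) (y := b') h0 h1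
  have hzc := sq_convex_aux (x := c) (y := c') h0 h1
  have hsum : X ^ 2 + Y ^ 2 ≤ (1 - l) * s + l * s' := by
    rw [hs, hs']; rw [hX, hY] at *; linarith
  have hXY : (0:ℝ) ≤ X ^ 2 + Y ^ 2 := by positivity
  have hsq : (X ^ 2 + Y ^ 2) ^ 2 ≤ ((1 - l) * s + l * s') ^ 2 :=
    pow_le_pow_left₀ hXY hsum 2
  have hsq2 : ((1 - l) * s + l * s') ^ 2 ≤ (1 - l) * s ^ 2 + l * s' ^ 2 :=
    sq_convex_aux h0 h1
  have hz16 : 16 * Z ^ 2 ≤ 16 * ((1 - l) * c ^ 2 + l * c' ^ 2) := by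
    rw [hZ] at *; linarith
  calc (X ^ 2 + Y ^ 2) ^ 2 + 16 * Z ^ 2
      ≤ ((1 - l) * s ^ 2 + l * s' ^ 2) + 16 * ((1 - l) * c ^ 2 + l * c' ^ 2) := by linarith
    _ = (1 - l) * (s ^ 2 + 16 * c ^ 2) + l * (s' ^ 2 + 16 * c' ^ 2) := by ring

lemma gball_hconvex {R : ℝ} (hR : 0 < R) : IsHConvex (gball (0 : Heis) R) := by
  intro p hp q _ hq w hw
  rw [mem_gball_iff hR] at hp hq ⊢
  obtain ⟨l, h0, h1, rfl⟩ := hw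
  have h := N4_convex (p := p) (q := q) h0 h1
  have hmax : (1 - l) * N4 p + l * N4 q ≤ max (N4 p) (N4 q) := by
    have := le_max_left (N4 p) (N4 q)
    have := le_max_right (N4 p) (N4 q)
    nlinarith
  exact lt_of_le_of_lt (h.trans hmax) (max_lt hp hq)

lemma gball_bounded {R : ℝ} (hR : 0 < R) : Bornology.IsBounded (gball (0 : Heis) R) := by
  rw [isBounded_iff_forall_norm_le]
  refine ⟨R + R ^ 2, fun q hq => ?_⟩
  rw [mem_gball_iff hR] at hq
  simp only [N4] at hq
  have h1 : q.1 ^ 2 < R ^ 2 := by nlinarith [sq_nonneg q.2.1, sq_nonneg q.2.2, sq_nonneg (q.1^2 + q.2.1^2 - R^2), sq_nonneg (q.1^2 + q.2.1^2 + R^2)]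
  have h2 : q.2.1 ^ 2 < R ^ 2 := by nlinarith [sq_nonneg q.1, sq_nonneg q.2.2, sq_nonneg (q.1^2 + q.2.1^2 - R^2), sq_nonneg (q.1^2 + q.2.1^2 + R^2)]
  have h3 : q.2.2 ^ 2 ≤ R ^ 4 := by nlinarith [sq_nonneg (q.1^2 + q.2.1^2)]
  have hq1 : |q.1| ≤ R := by
    rw [abs_le]; constructor <;> nlinarith [abs_nonneg q.1, sq_abs q.1]
  have hq2 : |q.2.1| ≤ R := by
    rw [abs_le]; constructor <;> nlinarith
  have hq3 : |q.2.2| ≤ R ^ 2 := by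
    rw [abs_le]; constructor <;> nlinarith
  have : ‖q‖ = max ‖q.1‖ (max ‖q.2.1‖ ‖q.2.2‖) := by
    rw [Prod.norm_def, Prod.norm_def]
  rw [this, Real.norm_eq_abs, Real.norm_eq_abs, Real.norm_eq_abs]
  have hR2 : (0:ℝ) ≤ R ^ 2 := sq_nonneg R
  apply max_le (by linarith) (max_le (by linarith) (by linarith))

/-- Any h-convex set containing the complement of the gauge ball is everything. -/
lemma hconvex_superset_compl_ball {R : ℝ} (hR : 0 < R) {D : Set Heis}
    (hD : IsHConvex D) (hcompl : ∀ x, x ∉ gball (0 : Heis) R → x ∈ D) :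
    ∀ w, w ∈ D := by
  intro w
  by_cases hw : w ∉ gball (0 : Heis) R
  · exact hcompl w hw
  push_neg at hw
  set t : ℝ := R + 1 + |w.1| with ht
  have htpos : 0 < t := by positivity
  set p : Heis := hmul w (t, 0, 0) with hp
  set p' : Heis := hmul w (-t, 0, 0) with hp'
  have hwt : |w.1| ≤ t := by simp [ht]; linarith
  have hp1 : R + 1 ≤ |(w.1 + t)| := by
    have : -(|w.1|) ≤ w.1 := neg_abs_le w.1
    rw [abs_of_nonneg (by simp [ht]; linarith)]
    simp [ht]; linarith
  have hp1' : R + 1 ≤ |(w.1 - t)| := by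
    have : w.1 ≤ |w.1| := le_abs_self w.1
    rw [abs_of_nonpos (by simp [ht]; linarith)]
    simp [ht]; linarith
  have key : ∀ x : Heis, R + 1 ≤ |x.1| → x ∉ gball (0 : Heis) R := by
    intro x hx hmem
    rw [mem_gball_iff hR] at hmem
    have h1 : (R + 1) ^ 2 ≤ x.1 ^ 2 := by
      have := sq_abs x.1
      nlinarith [abs_nonneg x.1]
    have : (R+1)^4 ≤ N4 x := by
      simp only [N4]; nlinarith [sq_nonneg x.2.1, sq_nonneg x.2.2, sq_nonneg (x.1^2), sq_nonneg (x.1 * x.2.1)]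
    nlinarith [sq_nonneg R, hR]
  have hR4 : R ^ 4 < (R + 1) ^ 4 := by nlinarith [sq_nonneg R, hR]
  have hpD : p ∈ D := hcompl p (key p (by rw [show p.1 = w.1 + t from rfl]; exact hp1))
  have hp'D : p' ∈ D := hcompl p' (key p' (by
    rw [show p'.1 = w.1 + -t from rfl]
    simpa [sub_eq_add_neg] using hp1'))
  have hplane_pp' : p' ∈ hplane p := by
    refine ⟨(-2*t, 0, 0), rfl, ?_⟩
    simp only [hp, hp', hmul, Prod.ext_iff]
    refine ⟨by ring, by ring, by ring⟩
  have hwseg : w ∈ hseg p p' := by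
    refine ⟨1/2, by norm_num, by norm_num, ?_⟩
    simp only [hp, hp', hmul, Prod.ext_iff, Prod.smul_fst, Prod.smul_snd, Prod.fst_add,
      Prod.snd_add, smul_eq_mul, Prod.mk_add_mk, Prod.smul_mk]
    refine ⟨by ring, by ring, by ring⟩
  exact hD p hpD p' hplane_pp' hp'D w hwseg

end Gauge
section Envelope

open Set

/-- Sublevel set of `f`. -/
def Slev (f : Heis → ℝ) (t : ℝ) : Set Heis := {x | f x ≤ t}

/-- Levels whose hull contains `p`. -/
def Aset (f : Heis → ℝ) (p : Heis) : Set ℝ := {t | p ∈ hconvexHull (Slev f t)}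

/-- The candidate envelope. -/
def genv (f : Heis → ℝ) (p : Heis) : ℝ := sInf (Aset f p)

lemma Slev_mono {f : Heis → ℝ} {s t : ℝ} (h : s ≤ t) : Slev f s ⊆ Slev f t :=
  fun x hx => le_trans hx h

lemma Aset_mono {f : Heis → ℝ} {s t : ℝ} (h : s ≤ t) {p : Heis}
    (hs : s ∈ Aset f p) : t ∈ Aset f p :=
  hconvexHull_mono (Slev_mono h) hs

lemma hull_univ_of_ge_K {R K : ℝ} (hR : 0 < R) {f : Heis → ℝ}
    (hfK : ∀ p ∉ gball (0 : Heis) R, f p = K) {t : ℝ} (hKt : K ≤ t) (w : Heis) :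
    w ∈ hconvexHull (Slev f t) := by
  refine hconvex_superset_compl_ball hR (isHConvex_hconvexHull _) (fun x hx => ?_) w
  exact subset_hconvexHull _ (show f x ≤ t by rw [hfK x hx]; exact hKt)

lemma K_mem_Aset {R K : ℝ} (hR : 0 < R) {f : Heis → ℝ}
    (hfK : ∀ p ∉ gball (0 : Heis) R, f p = K) (p : Heis) : K ∈ Aset f p :=
  hull_univ_of_ge_K hR hfK le_rfl p

lemma Aset_nonempty {R K : ℝ} (hR : 0 < R) {f : Heis → ℝ}
    (hfK : ∀ p ∉ gball (0 : Heis) R, f p = K) (p : Heis) : (Aset f p).Nonempty :=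
  ⟨K, K_mem_Aset hR hfK p⟩

lemma exists_global_lb {R K : ℝ} (hR : 0 < R) {f : Heis → ℝ} (hf : Continuous f)
    (hfK : ∀ p ∉ gball (0 : Heis) R, f p = K) : ∃ m0 : ℝ, ∀ x, m0 ≤ f x := by
  have hb : Bornology.IsBounded (closure (gball (0 : Heis) R)) := (gball_bounded hR).closure
  have hc : IsCompact (closure (gball (0 : Heis) R)) :=
    Metric.isCompact_of_isClosed_isBounded isClosed_closure hb
  have h0 : (0 : Heis) ∈ gball (0 : Heis) R := by
    rw [mem_gball_iff hR]
    have : N4 (0 : Heis) = 0 := by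
      simp [N4, Prod.fst_zero, Prod.snd_zero]
    rw [this]; positivity
  obtain ⟨x0, _, hx0⟩ := hc.exists_isMinOn ⟨0, subset_closure h0⟩ hf.continuousOn
  refine ⟨min (f x0) K, fun x => ?_⟩
  by_cases hx : x ∈ gball (0 : Heis) R
  · exact le_trans (min_le_left _ _) (hx0 (subset_closure hx))
  · rw [hfK x hx]; exact min_le_right _ _

lemma Aset_bddBelow {R K : ℝ} (hR : 0 < R) {f : Heis → ℝ} (hf : Continuous f)
    (hfK : ∀ p ∉ gball (0 : Heis) R, f p = K) (p : Heis) : BddBelow (Aset f p) := by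
  obtain ⟨m0, hm0⟩ := exists_global_lb hR hf hfK
  refine ⟨m0, fun t ht => ?_⟩
  by_contra hlt
  push_neg at hlt
  have hempty : Slev f t = ∅ := by
    ext x; simp only [Slev, mem_setOf_eq, mem_empty_iff_false, iff_false]
    intro hx; exact absurd (le_trans (hm0 x) hx) (not_le.2 hlt)
  have : hconvexHull (Slev f t) ⊆ ∅ := by
    apply hconvexHull_min _ (by rw [hempty])
    intro a ha; exact absurd ha (notMem_empty a)
  exact this ht

lemma genv_le {R K : ℝ} (hR : 0 < R) {f : Heis → ℝ} (hf : Continuous f)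
    (hfK : ∀ p ∉ gball (0 : Heis) R, f p = K) {p : Heis} {t : ℝ} (ht : t ∈ Aset f p) :
    genv f p ≤ t :=
  csInf_le (Aset_bddBelow hR hf hfK p) ht

lemma genv_le_f {R K : ℝ} (hR : 0 < R) {f : Heis → ℝ} (hf : Continuous f)
    (hfK : ∀ p ∉ gball (0 : Heis) R, f p = K) (p : Heis) : genv f p ≤ f p :=
  genv_le hR hf hfK (subset_hconvexHull _ (le_refl (f p)))

lemma genv_quasiconvex {R K : ℝ} (hR : 0 < R) {f : Heis → ℝ} (hf : Continuous f)
    (hfK : ∀ p ∉ gball (0 : Heis) R, f p = K) :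
    IsHQuasiconvexOn Set.univ (genv f) := by
  intro p _ q hq _ w hw
  apply le_of_forall_pos_le_add
  intro ε hε
  set m : ℝ := max (genv f p) (genv f q) with hm
  have hp' : m + ε ∈ Aset f p := by
    obtain ⟨s, hs, hslt⟩ := exists_lt_of_csInf_lt (Aset_nonempty hR hfK p)
      (show genv f p < m + ε from lt_of_le_of_lt (le_max_left _ _) (by linarith))
    exact Aset_mono hslt.le hs
  have hq' : m + ε ∈ Aset f q := by
    obtain ⟨s, hs, hslt⟩ := exists_lt_of_csInf_lt (Aset_nonempty hR hfK q)
      (show genv f q < m + ε from lt_of_le_of_lt (le_max_right _ _) (by linarith))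
    exact Aset_mono hslt.le hs
  have hw' : w ∈ hconvexHull (Slev f (m + ε)) :=
    isHConvex_hconvexHull _ p hp' q hq hq' w hw
  exact genv_le hR hf hfK hw'

lemma Slev_compact {R K : ℝ} (hR : 0 < R) {f : Heis → ℝ} (hf : Continuous f)
    (hfK : ∀ p ∉ gball (0 : Heis) R, f p = K) {s : ℝ} (hs : s < K) :
    IsCompact (Slev f s) := by
  apply Metric.isCompact_of_isClosed_isBounded
  · exact isClosed_Iic.preimage hf
  · apply (gball_bounded hR).subset
    intro x hx
    by_contra hxo
    simp only [Slev, Set.mem_setOf_eq] at hx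
    rw [hfK x hxo] at hx
    exact absurd hx (not_le.2 hs)

lemma continuous_hmul_right (a : Heis) : Continuous (fun q : Heis => hmul q a) := by
  unfold hmul; fun_prop

lemma continuous_hinv : Continuous hinv := by
  unfold hinv; fun_prop

/-- Tube lemma: small left translations map `{f ≤ s}` into `{f ≤ s'}`. -/
lemma translation_lemma {R K : ℝ} (hR : 0 < R) {f : Heis → ℝ} (hf : Continuous f)
    (hfK : ∀ p ∉ gball (0 : Heis) R, f p = K) {s s' : ℝ} (hss' : s < s') (hsK : s < K) :
    ∃ δ > 0, ∀ a : Heis, ‖a‖ < δ → ∀ x, f x ≤ s → f (hmul a x) ≤ s' := by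
  have hcomp := Slev_compact hR hf hfK hsK
  set O : Set (Heis × Heis) := (fun z : Heis × Heis => f (hmul z.1 z.2)) ⁻¹' (Iio s') with hO
  have hOopen : IsOpen O := isOpen_Iio.preimage (hf.comp continuous_hmul)
  have hsub : ({(0 : Heis)} : Set Heis) ×ˢ Slev f s ⊆ O := by
    rintro ⟨a, x⟩ ⟨ha, hx⟩
    simp only [mem_singleton_iff] at ha
    subst ha
    simp only [hO, mem_preimage, mem_Iio, zero_hmul']
    exact lt_of_le_of_lt hx hss'
  obtain ⟨u, v, hu, _, h0u, hSv, huv⟩ :=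
    generalized_tube_lemma isCompact_singleton hcomp hOopen hsub
  obtain ⟨δ, hδ, hball⟩ := Metric.isOpen_iff.1 hu 0 (h0u rfl)
  refine ⟨δ, hδ, fun a ha x hx => ?_⟩
  have hau : a ∈ u := hball (by rwa [Metric.mem_ball, dist_zero_right])
  have : (a, x) ∈ O := huv ⟨hau, hSv hx⟩
  exact le_of_lt this

lemma hull_translate {f : Heis → ℝ} {s s' : ℝ} (a : Heis)
    (h : ∀ x, f x ≤ s → f (hmul a x) ≤ s') {p : Heis}
    (hp : p ∈ hconvexHull (Slev f s)) : hmul a p ∈ hconvexHull (Slev f s') := by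
  have h1 := hmul_mem_hconvexHull a hp
  refine hconvexHull_mono ?_ h1
  rintro y ⟨x, hx, rfl⟩
  exact h x hx

lemma genv_continuous {R K : ℝ} (hR : 0 < R) (hK : 0 < K) {f : Heis → ℝ}
    (hf : Continuous f) (hfK : ∀ p ∉ gball (0 : Heis) R, f p = K) :
    Continuous (genv f) := by
  rw [continuous_iff_continuousAt]
  intro p0
  rw [ContinuousAt, Metric.tendsto_nhds]
  intro ε hε
  -- upper bound event
  have husc : ∀ᶠ q in nhds p0, genv f q < genv f p0 + ε := by
    obtain ⟨s, hs, hslt⟩ := exists_lt_of_csInf_lt (Aset_nonempty hR hfK p0)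
      (show genv f p0 < genv f p0 + ε / 2 by linarith)
    by_cases hsK : s < K
    · obtain ⟨δ, hδ, htl⟩ := translation_lemma hR hf hfK
        (show s < s + ε / 2 by linarith) hsK
      have hcont : ContinuousAt (fun q : Heis => hmul q (hinv p0)) p0 :=
        (continuous_hmul_right (hinv p0)).continuousAt
      have hmem : Metric.ball (0 : Heis) δ ∈ nhds (hmul p0 (hinv p0)) := by
        rw [hmul_hinv_self]; exact Metric.ball_mem_nhds 0 hδ
      filter_upwards [hcont.preimage_mem_nhds hmem] with q hq
      have hqa : ‖hmul q (hinv p0)‖ < δ := by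
        have := hq
        rwa [mem_preimage, Metric.mem_ball, dist_zero_right] at this
      have hp0s : p0 ∈ hconvexHull (Slev f s) := hs
      have : hmul (hmul q (hinv p0)) p0 ∈ hconvexHull (Slev f (s + ε / 2)) :=
        hull_translate _ (htl _ hqa) hp0s
      rw [hmul_hinv_cancel'] at this
      have := genv_le hR hf hfK this
      linarith
    · push_neg at hsK
      have : ∀ q, genv f q ≤ s := fun q =>
        genv_le hR hf hfK (hull_univ_of_ge_K hR hfK hsK q)
      filter_upwards with q
      exact lt_of_le_of_lt (this q) (by linarith)
  -- lower bound event
  have hlsc : ∀ᶠ q in nhds p0, genv f p0 - ε < genv f q := by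
    have hs2K : genv f p0 - ε / 2 < K := by
      by_contra hcon
      push_neg at hcon
      have : genv f p0 ≤ genv f p0 - ε / 2 :=
        genv_le hR hf hfK (hull_univ_of_ge_K hR hfK hcon p0)
      linarith
    obtain ⟨δ, hδ, htl⟩ := translation_lemma hR hf hfK
      (show genv f p0 - 3 * ε / 4 < genv f p0 - ε / 2 by linarith) (by linarith)
    have hcont : ContinuousAt (fun q : Heis => hmul p0 (hinv q)) p0 :=
      ((continuous_hmul_left p0).comp continuous_hinv).continuousAt
    have hmem : Metric.ball (0 : Heis) δ ∈ nhds (hmul p0 (hinv p0)) := by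
      rw [hmul_hinv_self]; exact Metric.ball_mem_nhds 0 hδ
    filter_upwards [hcont.preimage_mem_nhds hmem] with q hq
    by_contra hcon
    push_neg at hcon
    have hqs1 : genv f p0 - 3 * ε / 4 ∈ Aset f q := by
      obtain ⟨t, ht, htlt⟩ := exists_lt_of_csInf_lt (Aset_nonempty hR hfK q)
        (show genv f q < genv f p0 - 3 * ε / 4 from lt_of_le_of_lt hcon (by linarith))
      exact Aset_mono htlt.le ht
    have hqa : ‖hmul p0 (hinv q)‖ < δ := by
      have := hq
      rwa [mem_preimage, Metric.mem_ball, dist_zero_right] at this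
    have : hmul (hmul p0 (hinv q)) q ∈ hconvexHull (Slev f (genv f p0 - ε / 2)) :=
      hull_translate _ (htl _ hqa) hqs1
    rw [hmul_hinv_cancel'] at this
    have := genv_le hR hf hfK this
    linarith
  filter_upwards [husc, hlsc] with q h1 h2
  rw [Real.dist_eq, abs_sub_lt_iff]
  constructor <;> linarith

end Envelope
/-- Theorem 5.2 (Level set method for the h-convex hull): for a bounded open
set `E`, with `Ω = B_R(0)` containing `co(E)` compactly and a defining function
`f` that equals `K > 0` outside `B_R(0)`, the h-quasiconvex envelope `Q(f)` is
continuous, equals `K` outside `B_R(0)`, and `co(E) = {p ∈ Ω : Q(f)(p) < 0}`. -/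
theorem level_set_hconvex_hull_bounded
    (E : Set Heis) (hEb : Bornology.IsBounded E) (hEo : IsOpen E)
    (R : ℝ) (hR : 0 < R) (hco : closure (hconvexHull E) ⊆ gball (0 : Heis) R)
    (f : Heis → ℝ) (hf : Continuous f) (hE : E = {p : Heis | f p < 0})
    (K : ℝ) (hK : 0 < K) (hfK : ∀ p ∉ gball (0 : Heis) R, f p = K)
    (Qf : Heis → ℝ) (hQf : IsHQCEnvelopeOn Set.univ f Qf) :
    Continuous Qf ∧
    (∀ p ∉ gball (0 : Heis) R, Qf p = K) ∧
    hconvexHull E = {p : Heis | p ∈ gball (0 : Heis) R ∧ Qf p < 0} := by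
  classical
  obtain ⟨hQqc, hQlef, hQmax⟩ := hQf
  -- Qf p ≤ t for every t ∈ Aset f p
  have hQle : ∀ p : Heis, ∀ t ∈ Aset f p, Qf p ≤ t := by
    intro p t ht
    have hsub : hconvexHull (Slev f t) ⊆ {x | Qf x ≤ t} := by
      apply hconvexHull_min (sublevel_hconvex hQqc t)
      intro x hx
      exact le_trans (hQlef x trivial) hx
    exact hsub ht
  -- Qf = genv f
  have hQg : ∀ p : Heis, Qf p = genv f p := by
    intro p
    refine le_antisymm ?_ ?_
    · exact le_csInf (Aset_nonempty hR hfK p) (fun t ht => hQle p t ht)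
    · exact hQmax (genv f) (genv_quasiconvex hR hf hfK)
        (fun q _ => genv_le_f hR hf hfK q) p trivial
  refine ⟨?_, ?_, ?_⟩
  · rw [funext hQg]
    exact genv_continuous hR hK hf hfK
  · -- Qf = K outside the ball
    intro p hp
    have h1 : Qf p ≤ K :=
      le_trans (hQlef p trivial) (le_of_eq (hfK p hp))
    have h2 : K ≤ Qf p := by
      rw [hQg p]
      apply le_csInf (Aset_nonempty hR hfK p)
      intro t ht
      by_contra hcon
      push_neg at hcon
      have hsub : Slev f t ⊆ gball (0 : Heis) R := by
        intro x hx
        by_contra hxo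
        simp only [Slev, Set.mem_setOf_eq] at hx
        rw [hfK x hxo] at hx
        exact absurd (lt_of_le_of_lt hx hcon) (lt_irrefl K)
      have : hconvexHull (Slev f t) ⊆ gball (0 : Heis) R :=
        hconvexHull_min (gball_hconvex hR) hsub
      exact hp (this ht)
    exact le_antisymm h1 h2
  · -- the level set characterization
    ext p
    simp only [Set.mem_setOf_eq]
    constructor
    · intro hpco
      have hpball : p ∈ gball (0 : Heis) R := hco (subset_closure hpco)
      refine ⟨hpball, ?_⟩
      -- co(E) ⊆ union of hulls of negative sublevels
      set D : Set Heis := ⋃ t ∈ Set.Iio (0 : ℝ), hconvexHull (Slev f t) with hD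
      have hDconv : IsHConvex D := by
        intro a ha b hb hbD w hw
        simp only [hD, Set.mem_iUnion] at ha hbD ⊢
        obtain ⟨t1, ht1, ha1⟩ := ha
        obtain ⟨t2, ht2, hb2⟩ := hbD
        refine ⟨max t1 t2, Set.mem_Iio.2 (max_lt (Set.mem_Iio.1 ht1) (Set.mem_Iio.1 ht2)), ?_⟩
        exact isHConvex_hconvexHull _ a
          (hconvexHull_mono (Slev_mono (le_max_left _ _)) ha1) b hb
          (hconvexHull_mono (Slev_mono (le_max_right _ _)) hb2) w hw
      have hED : E ⊆ D := by
        intro x hx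
        rw [hE] at hx
        simp only [Set.mem_setOf_eq] at hx
        simp only [hD, Set.mem_iUnion]
        exact ⟨f x, hx, subset_hconvexHull _ (le_refl (f x))⟩
      have hpD : p ∈ D := hconvexHull_min hDconv hED hpco
      simp only [hD, Set.mem_iUnion] at hpD
      obtain ⟨t, ht, hpt⟩ := hpD
      exact lt_of_le_of_lt (hQle p t hpt) ht
    · rintro ⟨hpball, hQneg⟩
      rw [hQg p] at hQneg
      obtain ⟨t, ht, htneg⟩ := exists_lt_of_csInf_lt (Aset_nonempty hR hfK p) hQneg
      have hsub : Slev f t ⊆ E := by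
        intro x hx
        rw [hE]
        simp only [Slev, Set.mem_setOf_eq] at hx ⊢
        exact lt_of_le_of_lt hx htneg
      exact hconvexHull_mono hsub ht
end
end

section
/- Let E ⊂ ℍ be an open set and f ∈ C(ℍ) satisfy E = {p ∈ ℍ : f(p) < 0}. Assume the h-quasiconvex envelope Q(f) of f (over all of ℍ) exists and is real-valued. Then Q(f) ∈ USC(ℍ) and the h-convex hull of E satisfies co(E) = {p ∈ ℍ : Q(f)(p) < 0}. -/
noncomputable section

open Filter Topology

lemma heis_seg (c d : ℝ) (p q : Heis) :
    c • p + d • q = (c * p.1 + d * q.1, c * p.2.1 + d * q.2.1, c * p.2.2 + d * q.2.2) := rfl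

lemma perturb_plane (l a b : ℝ) (v : Heis) :
    ((v.1 + (1-l)*a, v.2.1 + (1-l)*b, v.2.2 + (1-l)*(v.1*b - a*v.2.1)/2) : Heis) ∈
      hplane (v.1 - l*a, v.2.1 - l*b, v.2.2 - l*(v.1*b - a*v.2.1)/2) := by
  refine ⟨(a, b, 0), rfl, ?_⟩
  simp only [hmul, Prod.mk.injEq]
  exact ⟨by ring, by ring, by ring⟩

lemma perturb_seg (l a b : ℝ) (hl0 : 0 ≤ l) (hl1 : l ≤ 1) (v : Heis) :
    v ∈ hseg ((v.1 - l*a, v.2.1 - l*b, v.2.2 - l*(v.1*b - a*v.2.1)/2) : Heis)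
             ((v.1 + (1-l)*a, v.2.1 + (1-l)*b, v.2.2 + (1-l)*(v.1*b - a*v.2.1)/2) : Heis) := by
  refine ⟨l, hl0, hl1, ?_⟩
  rw [heis_seg]
  obtain ⟨v1, v2, v3⟩ := v
  simp only [Prod.mk.injEq]
  exact ⟨by ring, by ring, by ring⟩

lemma main_bound (Qf : Heis → ℝ) (hQC : IsHQuasiconvexOn Set.univ Qf)
    (p q w : Heis) (hq : q ∈ hplane p) (hw : w ∈ hseg p q)
    (a₁ a₂ : ℝ) (h1 : ∀ᶠ v in 𝓝 p, Qf v ≤ a₁) (h2 : ∀ᶠ v in 𝓝 q, Qf v ≤ a₂) :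
    ∀ᶠ v in 𝓝 w, Qf v ≤ max a₁ a₂ := by
  obtain ⟨h, hh0, rfl⟩ := hq
  obtain ⟨l, hl0, hl1, rfl⟩ := hw
  obtain ⟨a, b, c⟩ := h
  obtain ⟨p1, p2, p3⟩ := p
  have hc0 : c = 0 := hh0
  subst hc0
  set P : Heis → Heis :=
    fun v => (v.1 - l*a, v.2.1 - l*b, v.2.2 - l*(v.1*b - a*v.2.1)/2) with hPdef
  set Q : Heis → Heis :=
    fun v => (v.1 + (1-l)*a, v.2.1 + (1-l)*b, v.2.2 + (1-l)*(v.1*b - a*v.2.1)/2) with hQdef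
  have hPc : Continuous P := by rw [hPdef]; fun_prop
  have hQc : Continuous Q := by rw [hQdef]; fun_prop
  set w0 : Heis := (1 - l) • ((p1, p2, p3) : Heis) + l • hmul (p1, p2, p3) (a, b, 0) with hw0
  have hw0c : w0 = (p1 + l*a, p2 + l*b, p3 + l*(p1*b - a*p2)/2) := by
    rw [hw0, heis_seg]
    simp only [hmul, Prod.mk.injEq]
    exact ⟨by ring, by ring, by ring⟩
  have hPw : P w0 = (p1, p2, p3) := by
    rw [hPdef, hw0c]
    simp only [Prod.mk.injEq]
    exact ⟨by ring, by ring, by ring⟩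
  have hQw : Q w0 = hmul (p1, p2, p3) (a, b, 0) := by
    rw [hQdef, hw0c]
    simp only [hmul, Prod.mk.injEq]
    exact ⟨by ring, by ring, by ring⟩
  have e1 : ∀ᶠ v in 𝓝 w0, Qf (P v) ≤ a₁ := (hPw ▸ hPc.tendsto w0).eventually h1
  have e2 : ∀ᶠ v in 𝓝 w0, Qf (Q v) ≤ a₂ := (hQw ▸ hQc.tendsto w0).eventually h2
  filter_upwards [e1, e2] with v hv1 hv2
  have key := hQC (P v) (Set.mem_univ _) (Q v) (perturb_plane l a b v) (Set.mem_univ _)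
      v (perturb_seg l a b hl0 hl1 v)
  exact key.trans (max_le_max hv1 hv2)

/-- Theorem 5.3 (Level set method for the h-convex hull of a general open set):
if `E = {f < 0}` for `f ∈ C(ℍ)` and the h-quasiconvex envelope `Q(f)` over `ℍ`
exists, then `Q(f) ∈ USC(ℍ)` and `co(E) = {p ∈ ℍ : Q(f)(p) < 0}`. -/
theorem level_set_hconvex_hull_general
    (E : Set Heis) (hEo : IsOpen E)
    (f : Heis → ℝ) (hf : Continuous f) (hE : E = {p : Heis | f p < 0})
    (Qf : Heis → ℝ) (hQf : IsHQCEnvelopeOn Set.univ f Qf) :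
    UpperSemicontinuous Qf ∧
    hconvexHull E = {p : Heis | Qf p < 0} := by
  classical
  obtain ⟨hQC, hle, hmax⟩ := hQf
  -- the set of eventual upper bounds and the usc envelope
  set S : Heis → Set ℝ := fun x => {c | ∀ᶠ v in 𝓝 x, Qf v ≤ c} with hS
  have hne : ∀ x, (S x).Nonempty := by
    intro x
    refine ⟨f x + 1, ?_⟩
    have hev : ∀ᶠ v in 𝓝 x, f v < f x + 1 :=
      hf.continuousAt.eventually_lt continuousAt_const (by linarith)
    filter_upwards [hev] with v hv
    exact (hle v (Set.mem_univ v)).trans hv.le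
  have hbdd : ∀ x, Qf x ∈ lowerBounds (S x) := fun x c hc => hc.self_of_nhds
  set Qs : Heis → ℝ := fun x => sInf (S x) with hQsdef
  have hQfle : ∀ x, Qf x ≤ Qs x := fun x => le_csInf (hne x) (hbdd x)
  have hQsf : ∀ x ∈ Set.univ, Qs x ≤ f x := by
    intro x _
    refine le_of_forall_pos_le_add ?_
    intro ε hε
    refine csInf_le ⟨Qf x, hbdd x⟩ ?_
    have hev : ∀ᶠ v in 𝓝 x, f v < f x + ε :=
      hf.continuousAt.eventually_lt continuousAt_const (by linarith)
    filter_upwards [hev] with v hv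
    exact (hle v (Set.mem_univ v)).trans hv.le
  have hQshqc : IsHQuasiconvexOn Set.univ Qs := by
    intro p _ q hq _ w hw
    refine le_of_forall_pos_le_add ?_
    intro ε hε
    obtain ⟨a₁, ha₁S, ha₁⟩ := exists_lt_of_csInf_lt (hne p) (lt_add_of_pos_right (Qs p) hε)
    obtain ⟨a₂, ha₂S, ha₂⟩ := exists_lt_of_csInf_lt (hne q) (lt_add_of_pos_right (Qs q) hε)
    have hmem : max a₁ a₂ ∈ S w := main_bound Qf hQC p q w hq hw a₁ a₂ ha₁S ha₂S
    have h1 : Qs w ≤ max a₁ a₂ := csInf_le ⟨Qf w, hbdd w⟩ hmem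
    have h2 : max a₁ a₂ ≤ max (Qs p) (Qs q) + ε :=
      max_le (ha₁.le.trans (add_le_add (le_max_left _ _) le_rfl))
        (ha₂.le.trans (add_le_add (le_max_right _ _) le_rfl))
    exact h1.trans h2
  have hQsle : ∀ x, Qs x ≤ Qf x := fun x => hmax Qs hQshqc hQsf x (Set.mem_univ x)
  have husc : UpperSemicontinuous Qf := by
    intro x y hxy
    have : sInf (S x) < y := lt_of_le_of_lt (hQsle x) hxy
    obtain ⟨c, hcS, hcy⟩ := exists_lt_of_csInf_lt (hne x) this
    filter_upwards [hcS] with v hv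
    exact lt_of_le_of_lt hv hcy
  refine ⟨husc, ?_⟩
  -- the sublevel set {Qf < 0}
  have hG : IsHConvex {p : Heis | Qf p < 0} := by
    intro p hp q hq hqm w hw
    exact lt_of_le_of_lt (hQC p (Set.mem_univ _) q hq (Set.mem_univ _) w hw) (max_lt hp hqm)
  have hEG : E ⊆ {p : Heis | Qf p < 0} := by
    intro x hx
    rw [hE] at hx
    exact lt_of_le_of_lt (hle x (Set.mem_univ x)) hx
  -- the hull
  set D : Set Heis := hconvexHull E with hD
  have hDconv : IsHConvex D := by
    intro p hp q hq hqD w hw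
    refine Set.mem_sInter.mpr fun C hC => ?_
    exact hC.1 p (Set.mem_sInter.mp hp C hC) q hq (Set.mem_sInter.mp hqD C hC) w hw
  have hED : E ⊆ D := fun x hx => Set.mem_sInter.mpr fun C hC => hC.2 hx
  apply Set.Subset.antisymm
  · exact Set.sInter_subset_of_mem ⟨hG, hEG⟩
  · intro x hx
    by_contra hxD
    set g : Heis → ℝ := fun y => if y ∈ D then Qf y else max (Qf y) 0 with hg
    have hgQf : ∀ y, Qf y ≤ g y := by
      intro y
      by_cases hy : y ∈ D <;> simp [hg, hy, le_max_left]
    have hgf : ∀ y ∈ Set.univ, g y ≤ f y := by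
      intro y _
      by_cases hy : y ∈ D
      · simpa [hg, hy] using hle y (Set.mem_univ y)
      · have hfy : 0 ≤ f y := by
          by_contra hfy
          exact hy (hED (by rw [hE]; exact lt_of_not_ge hfy))
        simp only [hg, hy, if_false]
        exact max_le (hle y (Set.mem_univ y)) hfy
    have hgqc : IsHQuasiconvexOn Set.univ g := by
      intro p _ q hq _ w hw
      have base : Qf w ≤ max (g p) (g q) :=
        (hQC p (Set.mem_univ _) q hq (Set.mem_univ _) w hw).trans
          (max_le_max (hgQf p) (hgQf q))
      by_cases hwD : w ∈ D
      · simpa [hg, hwD] using base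
      · have h0 : 0 ≤ max (g p) (g q) := by
          by_cases hpD : p ∈ D
          · have hqD : q ∉ D := fun hqD => hwD (hDconv p hpD q hq hqD w hw)
            exact le_trans (by simp [hg, hqD, le_max_right]) (le_max_right (g p) (g q))
          · exact le_trans (by simp [hg, hpD, le_max_right]) (le_max_left (g p) (g q))
        simp only [hg, hwD, if_false]
        exact max_le base h0
    have := hmax g hgqc hgf x (Set.mem_univ x)
    have hgx : g x = max (Qf x) 0 := by simp [hg, hxD]
    rw [hgx] at this
    have : (0 : ℝ) ≤ Qf x := le_trans (le_max_right (Qf x) 0) this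
    exact absurd hx (not_lt.mpr this)
end
end
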